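/- arXiv:2101.00205 — 12 statements merged into one kernel-verified Lean document; each statement's English description precedes it below -/
import Mathlib

section
/- In the coefficient dynamics d_{k+1}^i = d_k^i · (Σ_j (λ_j - λ_i)(d_{k-1}^j)^2)/(Σ_j λ_j (d_{k-1}^j)^2) with 0 < λ_1 ≤ ... ≤ λ_n and d_{k-1} ≠ 0, one has |d_{k+1}^i| ≤ |d_k^i| · max{λ_i/λ_1 - 1, 1 - λ_i/λ_n} for every i. -/
/-- In the BB coefficient dynamics with 0 < λ_1 ≤ ⋯ ≤ λ_n and d_{k-1} ≠ 0,
one has |d_{k+1}^i| ≤ |d_k^i| · max{λ_i/λ_1 - 1, 1 - λ_i/λ_n} for every i. -/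
theorem bb_general_ratio_bound {n : ℕ}
    (lam : Fin (n + 1) → ℝ) (hpos : 0 < lam 0) (hmono : Monotone lam)
    (d : ℕ → Fin (n + 1) → ℝ) (k : ℕ) (hk : 1 ≤ k) (hnz : d (k - 1) ≠ 0)
    (hrec : ∀ i, d (k + 1) i = d k i *
      ((∑ j, (lam j - lam i) * d (k - 1) j ^ 2) / (∑ j, lam j * d (k - 1) j ^ 2))) :
    ∀ i, |d (k + 1) i| ≤ |d k i| * max (lam i / lam 0 - 1) (1 - lam i / lam (Fin.last n)) := by
  intro i
  set S : ℝ := ∑ j, lam j * d (k - 1) j ^ 2 with hS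
  set W : ℝ := ∑ j, d (k - 1) j ^ 2 with hW
  obtain ⟨j0, hj0⟩ : ∃ j, d (k - 1) j ≠ 0 := by
    by_contra h; push_neg at h; exact hnz (funext h)
  have hWpos : 0 < W := by
    apply Finset.sum_pos' (fun j _ => sq_nonneg _)
    exact ⟨j0, Finset.mem_univ _, by positivity⟩
  have hlam : ∀ j, 0 < lam j := fun j => lt_of_lt_of_le hpos (hmono (Fin.zero_le j))
  have hSlow : lam 0 * W ≤ S := by
    rw [hW, hS, Finset.mul_sum]
    exact Finset.sum_le_sum fun j _ =>
      mul_le_mul_of_nonneg_right (hmono (Fin.zero_le j)) (sq_nonneg _)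
  have hShigh : S ≤ lam (Fin.last n) * W := by
    rw [hW, hS, Finset.mul_sum]
    exact Finset.sum_le_sum fun j _ =>
      mul_le_mul_of_nonneg_right (hmono (Fin.le_last j)) (sq_nonneg _)
  have hSpos : 0 < S := lt_of_lt_of_le (by positivity) hSlow
  have hT : (∑ j, (lam j - lam i) * d (k - 1) j ^ 2) = S - lam i * W := by
    rw [hS, hW, Finset.mul_sum, ← Finset.sum_sub_distrib]
    congr 1; ext j; ring
  have hipos := hlam i
  have hnpos := hlam (Fin.last n)
  have hratio : |(S - lam i * W) / S| ≤
      max (lam i / lam 0 - 1) (1 - lam i / lam (Fin.last n)) := by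
    rw [abs_le]
    constructor
    · have h1 : 1 - lam i / lam 0 ≤ (S - lam i * W) / S := by
        rw [le_div_iff₀ hSpos]
        have : lam i * W ≤ lam i / lam 0 * S := by
          rw [div_mul_eq_mul_div, le_div_iff₀ hpos]
          calc lam i * W * lam 0 = lam i * (lam 0 * W) := by ring
            _ ≤ lam i * S := by nlinarith
        nlinarith
      have := neg_le_neg (le_max_left (lam i / lam 0 - 1) (1 - lam i / lam (Fin.last n)))
      linarith [this.trans (by linarith : -(lam i / lam 0 - 1) ≤ (S - lam i * W) / S)]
    · refine le_trans ?_ (le_max_right _ _)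
      rw [div_le_iff₀ hSpos]
      have : lam i / lam (Fin.last n) * S ≤ lam i * W := by
        rw [div_mul_eq_mul_div, div_le_iff₀ hnpos]
        calc lam i * S ≤ lam i * (lam (Fin.last n) * W) := by nlinarith
          _ = lam i * W * lam (Fin.last n) := by ring
      nlinarith
  calc |d (k + 1) i| = |d k i| * |(S - lam i * W) / S| := by
        rw [hrec i, hT, abs_mul]
    _ ≤ |d k i| * max (lam i / lam 0 - 1) (1 - lam i / lam (Fin.last n)) :=
        mul_le_mul_of_nonneg_left hratio (abs_nonneg _)
end

section
/- If index i is in the shrinking mode at iteration k-1, i.e., Σ_j (λ_j - λ_i)(d_{k-1}^j)^2 ≥ 0, then |d_{k+1}^i| ≤ (1 - λ_i/λ_n)|d_k^i| ≤ (1 - 1/κ)|d_k^i|, where κ = λ_n/λ_1. -/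
/-- If index i is in the shrinking mode at iteration k-1, i.e.
Σ_j (λ_j - λ_i)(d_{k-1}^j)² ≥ 0, then |d_{k+1}^i| ≤ (1 - λ_i/λ_n)|d_k^i| ≤ (1 - 1/κ)|d_k^i|,
where κ = λ_n/λ_1. -/
theorem bb_shrinking_mode_contraction {n : ℕ}
    (lam : Fin (n + 1) → ℝ) (hpos : 0 < lam 0) (hmono : Monotone lam)
    (κ : ℝ) (hκ : κ = lam (Fin.last n) / lam 0)
    (d : ℕ → Fin (n + 1) → ℝ) (k : ℕ) (hk : 1 ≤ k) (hnz : d (k - 1) ≠ 0)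
    (hrec : ∀ i, d (k + 1) i = d k i *
      ((∑ j, (lam j - lam i) * d (k - 1) j ^ 2) / (∑ j, lam j * d (k - 1) j ^ 2)))
    (i : Fin (n + 1))
    (hshrink : 0 ≤ ∑ j, (lam j - lam i) * d (k - 1) j ^ 2) :
    |d (k + 1) i| ≤ (1 - lam i / lam (Fin.last n)) * |d k i| ∧
    (1 - lam i / lam (Fin.last n)) * |d k i| ≤ (1 - 1 / κ) * |d k i| := by
  set N := ∑ j, (lam j - lam i) * d (k - 1) j ^ 2 with hN
  set S := ∑ j, lam j * d (k - 1) j ^ 2 with hS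
  set T := ∑ j, d (k - 1) j ^ 2 with hT
  have hlampos : ∀ j, 0 < lam j := fun j => lt_of_lt_of_le hpos (hmono (Fin.zero_le j))
  have hln : 0 < lam (Fin.last n) := hlampos _
  -- T > 0
  obtain ⟨j0, hj0⟩ : ∃ j, d (k - 1) j ≠ 0 := by
    by_contra h; push_neg at h; exact hnz (funext h)
  have hT0 : 0 < T := by
    apply Finset.sum_pos' (fun j _ => sq_nonneg _)
    exact ⟨j0, Finset.mem_univ _, by positivity⟩
  have hS0 : 0 < S := by
    apply Finset.sum_pos' (fun j _ => mul_nonneg (hlampos j).le (sq_nonneg _))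
    exact ⟨j0, Finset.mem_univ _, mul_pos (hlampos j0) (by positivity)⟩
  have hNeq : N = S - lam i * T := by
    rw [hN, hS, hT, Finset.mul_sum, ← Finset.sum_sub_distrib]
    congr 1; ext j; ring
  have hTS : S ≤ lam (Fin.last n) * T := by
    rw [hT, Finset.mul_sum]
    apply Finset.sum_le_sum
    intro j _
    exact mul_le_mul_of_nonneg_right (hmono (Fin.le_last j)) (sq_nonneg _)
  -- N/S ≤ 1 - lam i / lam last
  have key : N / S ≤ 1 - lam i / lam (Fin.last n) := by
    rw [div_le_iff₀ hS0]
    have h1 : lam i * S ≤ lam i * (lam (Fin.last n) * T) :=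
      mul_le_mul_of_nonneg_left hTS (hlampos i).le
    have h2 : N * lam (Fin.last n) ≤ (lam (Fin.last n) - lam i) * S := by
      rw [hNeq]; nlinarith
    have h3 : lam i / lam (Fin.last n) * lam (Fin.last n) = lam i :=
      div_mul_cancel₀ _ hln.ne'
    nlinarith [h2, h3, hln, hS0]
  constructor
  · rw [hrec i, abs_mul, abs_div, abs_of_nonneg hshrink, abs_of_nonneg hS0.le, mul_comm]
    exact mul_le_mul_of_nonneg_right key (abs_nonneg _)
  · apply mul_le_mul_of_nonneg_right _ (abs_nonneg _)
    rw [hκ, one_div, inv_div]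
    have : lam 0 / lam (Fin.last n) ≤ lam i / lam (Fin.last n) :=
      (div_le_div_iff_of_pos_right hln).mpr (hmono (Fin.zero_le i))
    linarith
end

section
/- If index i is in the fluctuation mode at iteration k-1, i.e., Σ_j (λ_j - λ_i)(d_{k-1}^j)^2 < 0, and additionally (d_{k-1}^i)^2 ≥ Σ_{j<i} (d_{k-1}^j)^2, then |d_{k+1}^i| ≤ (1 - λ_1/λ_i)|d_k^i| ≤ (1 - 1/κ)|d_k^i|. -/
/-- If index i is in the fluctuation mode at iteration k-1, i.e.
Σ_j (λ_j - λ_i)(d_{k-1}^j)² < 0, and additionally (d_{k-1}^i)² ≥ Σ_{j<i}(d_{k-1}^j)²,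
then |d_{k+1}^i| ≤ (1 - λ_1/λ_i)|d_k^i| ≤ (1 - 1/κ)|d_k^i|. -/
theorem bb_fluctuation_mode_contraction {n : ℕ}
    (lam : Fin (n + 1) → ℝ) (hpos : 0 < lam 0) (hmono : Monotone lam)
    (κ : ℝ) (hκ : κ = lam (Fin.last n) / lam 0)
    (d : ℕ → Fin (n + 1) → ℝ) (k : ℕ) (hk : 1 ≤ k) (hnz : d (k - 1) ≠ 0)
    (hrec : ∀ i, d (k + 1) i = d k i *
      ((∑ j, (lam j - lam i) * d (k - 1) j ^ 2) / (∑ j, lam j * d (k - 1) j ^ 2)))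
    (i : Fin (n + 1))
    (hfluct : ∑ j, (lam j - lam i) * d (k - 1) j ^ 2 < 0)
    (hdom : ∑ j ∈ Finset.Iio i, d (k - 1) j ^ 2 ≤ d (k - 1) i ^ 2) :
    |d (k + 1) i| ≤ (1 - lam 0 / lam i) * |d k i| ∧
    (1 - lam 0 / lam i) * |d k i| ≤ (1 - 1 / κ) * |d k i| := by
  have hposi : 0 < lam i := lt_of_lt_of_le hpos (hmono (Fin.zero_le i))
  have hle0i : lam 0 ≤ lam i := hmono (Fin.zero_le i)
  set S := ∑ j, (lam j - lam i) * d (k - 1) j ^ 2 with hS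
  set D := ∑ j, lam j * d (k - 1) j ^ 2 with hD
  have hDpos : 0 < D := by
    obtain ⟨j, hj⟩ := Function.ne_iff.mp hnz
    apply Finset.sum_pos' (fun l _ => by
      have : 0 < lam l := lt_of_lt_of_le hpos (hmono (Fin.zero_le l))
      positivity)
    refine ⟨j, Finset.mem_univ j, ?_⟩
    have h1 : 0 < lam j := lt_of_lt_of_le hpos (hmono (Fin.zero_le j))
    exact mul_pos h1 (pow_two_pos_of_ne_zero hj)
  -- key inequality: -S ≤ (1 - lam 0 / lam i) * D
  have hkey : -S ≤ (1 - lam 0 / lam i) * D := by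
    have hsplit : ∑ j ∈ Finset.Iio i, (lam i - lam j) * d (k - 1) j ^ 2
        + ∑ j ∈ (Finset.Iio i)ᶜ, (lam i - lam j) * d (k - 1) j ^ 2 = -S := by
      rw [Finset.sum_add_sum_compl]
      rw [hS, ← Finset.sum_neg_distrib]
      exact Finset.sum_congr rfl fun j _ => by ring
    have h1 : ∑ j ∈ (Finset.Iio i)ᶜ, (lam i - lam j) * d (k - 1) j ^ 2 ≤ 0 := by
      apply Finset.sum_nonpos
      intro j hj
      have : i ≤ j := le_of_not_gt (by simpa using hj)
      have := hmono this
      have hd : (0:ℝ) ≤ d (k - 1) j ^ 2 := by positivity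
      nlinarith
    have h2 : ∑ j ∈ Finset.Iio i, (lam i - lam j) * d (k - 1) j ^ 2
        ≤ (lam i - lam 0) * ∑ j ∈ Finset.Iio i, d (k - 1) j ^ 2 := by
      rw [Finset.mul_sum]
      apply Finset.sum_le_sum
      intro j _
      have := hmono (Fin.zero_le j)
      have hd : (0:ℝ) ≤ d (k - 1) j ^ 2 := by positivity
      nlinarith
    have h3 : (lam i - lam 0) * ∑ j ∈ Finset.Iio i, d (k - 1) j ^ 2
        ≤ (lam i - lam 0) * d (k - 1) i ^ 2 := by
      apply mul_le_mul_of_nonneg_left hdom (by linarith)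
    have h4 : lam i * d (k - 1) i ^ 2 ≤ D := by
      apply Finset.single_le_sum (f := fun j => lam j * d (k - 1) j ^ 2)
        (fun l _ => by
          have : 0 < lam l := lt_of_lt_of_le hpos (hmono (Fin.zero_le l))
          positivity) (Finset.mem_univ i)
    have h5 : (lam i - lam 0) * d (k - 1) i ^ 2 ≤ (1 - lam 0 / lam i) * D := by
      have hc : (1 - lam 0 / lam i) * lam i = lam i - lam 0 := by
        field_simp
      have hcnn : 0 ≤ 1 - lam 0 / lam i := by
        rw [sub_nonneg, div_le_one hposi]; exact hle0i
      calc (lam i - lam 0) * d (k - 1) i ^ 2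
          = (1 - lam 0 / lam i) * (lam i * d (k - 1) i ^ 2) := by rw [← hc]; ring
        _ ≤ (1 - lam 0 / lam i) * D := mul_le_mul_of_nonneg_left h4 hcnn
    linarith
  constructor
  · rw [hrec i, abs_mul, mul_comm]
    apply mul_le_mul_of_nonneg_right _ (abs_nonneg _)
    rw [abs_div, abs_of_pos hDpos, abs_of_neg hfluct, div_le_iff₀ hDpos]
    exact hkey
  · apply mul_le_mul_of_nonneg_right _ (abs_nonneg _)
    have hlast : lam i ≤ lam (Fin.last n) := hmono (Fin.le_last i)
    have hlastpos : 0 < lam (Fin.last n) := lt_of_lt_of_le hpos (hmono (Fin.zero_le _))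
    have hκpos : 0 < κ := by rw [hκ]; positivity
    have : 1 / κ ≤ lam 0 / lam i := by
      rw [hκ, one_div_div]
      exact div_le_div_of_nonneg_left hpos.le hposi hlast
    linarith
end

section
/- The coefficient corresponding to the minimal eigenvalue is always in the shrinking mode: for every k, Σ_j (λ_j - λ_1)(d_k^j)^2 ≥ 0; consequently |d_{k+1}^1| ≤ (1 - 1/κ)|d_k^1| for all k ≥ 1, so |d_k^1| ≤ |d_0^1|(1 - 1/κ)^k for k ≥ 1 (given |d_1^1| ≤ (1-1/κ)|d_0^1| from the first gradient step). -/
/-- The coefficient corresponding to the minimal eigenvalue is always in the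
shrinking mode, hence |d_{k+1}^1| ≤ (1 - 1/κ)|d_k^1| for all k ≥ 1 and
|d_k^1| ≤ |d_0^1|(1 - 1/κ)^k for k ≥ 1. -/
theorem bb_first_coefficient_always_shrinks {n : ℕ}
    (lam : Fin (n + 1) → ℝ) (hpos : 0 < lam 0) (hmono : Monotone lam)
    (κ : ℝ) (hκ : κ = lam (Fin.last n) / lam 0)
    (d : ℕ → Fin (n + 1) → ℝ)
    (hrec : ∀ k, 1 ≤ k → ∀ i, d (k + 1) i = d k i *
      ((∑ j, (lam j - lam i) * d (k - 1) j ^ 2) / (∑ j, lam j * d (k - 1) j ^ 2)))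
    (hfirst : ∀ i, d 1 i = d 0 i *
      ((∑ j, (lam j - lam i) * d 0 j ^ 2) / (∑ j, lam j * d 0 j ^ 2)))
    (hnz : ∀ k, d k ≠ 0) :
    (∀ k, 0 ≤ ∑ j, (lam j - lam 0) * d k j ^ 2) ∧
    (∀ k, 1 ≤ k → |d (k + 1) 0| ≤ (1 - 1 / κ) * |d k 0|) ∧
    (∀ k, 1 ≤ k → |d k 0| ≤ |d 0 0| * (1 - 1 / κ) ^ k) := by
  have hlamn : 0 < lam (Fin.last n) := lt_of_lt_of_le hpos (hmono (Fin.zero_le _))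
  have hκ1 : 1 ≤ κ := by
    rw [hκ]; exact (one_le_div hpos).mpr (hmono (Fin.le_last _))
  have hS : ∀ k, 0 < ∑ j, d k j ^ 2 := by
    intro k
    obtain ⟨i, hi⟩ := Function.ne_iff.mp (hnz k)
    exact Finset.sum_pos' (fun j _ => sq_nonneg _)
      ⟨i, Finset.mem_univ i, by nlinarith [sq_nonneg (d k i), sq_abs (d k i), abs_pos.mpr hi]⟩
  have hD : ∀ k, 0 < ∑ j, lam j * d k j ^ 2 := by
    intro k
    refine lt_of_lt_of_le (mul_pos hpos (hS k)) ?_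
    rw [Finset.mul_sum]
    exact Finset.sum_le_sum fun j _ =>
      mul_le_mul_of_nonneg_right (hmono (Fin.zero_le j)) (sq_nonneg _)
  have hNum : ∀ k, 0 ≤ ∑ j, (lam j - lam 0) * d k j ^ 2 := fun k =>
    Finset.sum_nonneg fun j _ =>
      mul_nonneg (sub_nonneg.mpr (hmono (Fin.zero_le j))) (sq_nonneg _)
  have hRatio : ∀ k,
      (∑ j, (lam j - lam 0) * d k j ^ 2) / (∑ j, lam j * d k j ^ 2) ≤ 1 - 1 / κ := by
    intro k
    rw [div_le_iff₀ (hD k)]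
    have key : (∑ j, lam j * d k j ^ 2) ≤ lam (Fin.last n) * ∑ j, d k j ^ 2 := by
      rw [Finset.mul_sum]
      exact Finset.sum_le_sum fun j _ =>
        mul_le_mul_of_nonneg_right (hmono (Fin.le_last j)) (sq_nonneg _)
    have expand : ∑ j, (lam j - lam 0) * d k j ^ 2
        = (∑ j, lam j * d k j ^ 2) - lam 0 * ∑ j, d k j ^ 2 := by
      rw [Finset.mul_sum, ← Finset.sum_sub_distrib]
      exact Finset.sum_congr rfl fun j _ => by ring
    rw [expand, hκ, one_div_div]
    have h2 : lam 0 / lam (Fin.last n) * (∑ j, lam j * d k j ^ 2)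
        ≤ lam 0 * ∑ j, d k j ^ 2 := by
      rw [div_mul_eq_mul_div, div_le_iff₀ hlamn]
      calc lam 0 * ∑ j, lam j * d k j ^ 2
          ≤ lam 0 * (lam (Fin.last n) * ∑ j, d k j ^ 2) :=
            mul_le_mul_of_nonneg_left key hpos.le
        _ = lam 0 * (∑ j, d k j ^ 2) * lam (Fin.last n) := by ring
    nlinarith [hD k]
  have hshrink : ∀ k, 1 ≤ k → |d (k + 1) 0| ≤ (1 - 1 / κ) * |d k 0| := by
    intro k hk
    rw [hrec k hk 0, abs_mul, mul_comm]
    apply mul_le_mul_of_nonneg_right _ (abs_nonneg _)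
    rw [abs_of_nonneg (div_nonneg (hNum _) (hD _).le)]
    exact hRatio _
  refine ⟨hNum, hshrink, ?_⟩
  intro k hk
  induction k with
  | zero => omega
  | succ m ih =>
    rcases Nat.lt_or_ge m 1 with h | h
    · have hm : m = 0 := by omega
      subst hm
      rw [hfirst 0, abs_mul, pow_one]
      apply mul_le_mul_of_nonneg_left _ (abs_nonneg _)
      rw [abs_of_nonneg (div_nonneg (hNum 0) (hD 0).le)]
      exact hRatio 0
    · have h1 : 0 ≤ 1 - 1 / κ := by
        have : 1 / κ ≤ 1 := by
          rw [div_le_one (lt_of_lt_of_le one_pos hκ1)]; exact hκ1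
        linarith
      calc |d (m + 1) 0| ≤ (1 - 1 / κ) * |d m 0| := hshrink m h
        _ ≤ (1 - 1 / κ) * (|d 0 0| * (1 - 1 / κ) ^ m) :=
            mul_le_mul_of_nonneg_left (ih h) h1
        _ = |d 0 0| * (1 - 1 / κ) ^ (m + 1) := by ring
end

section
/- (Main theorem) For the BB method on a strongly convex quadratic with condition number κ = λ_n/λ_1, each coefficient sequence satisfies |d_k^i| ≤ F_i θ^k for all k ≥ 1, where θ = 1 - 1/κ and F_i is defined recursively by F_1 = |d_0^1| and F_i = max{|d_0^i|, |d_1^i|/θ, θ^{-2} C^2 sqrt(Σ_{j<i} F_j^2)} with C = max{λ_i/λ_1 - 1, 1 - λ_i/λ_n}. Hence the BB method converges R-linearly with rate 1 - 1/κ. -/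
private lemma bb_aux_A {n : ℕ} (lam : Fin (n + 1) → ℝ) (hpos : 0 < lam 0)
    (hmono : Monotone lam) (i : Fin (n + 1)) (w : Fin (n + 1) → ℝ)
    (hw : ∀ j, 0 ≤ w j) :
    |∑ j, (lam j - lam i) * w j| ≤
      (max (lam i / lam 0 - 1) (1 - lam i / lam (Fin.last n))) * ∑ j, lam j * w j := by
  set c := max (lam i / lam 0 - 1) (1 - lam i / lam (Fin.last n)) with hc
  have hLn : 0 < lam (Fin.last n) := lt_of_lt_of_le hpos (hmono (Fin.zero_le _))
  have h1 : lam i / lam 0 - 1 ≤ c := le_max_left _ _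
  have h2 : 1 - lam i / lam (Fin.last n) ≤ c := le_max_right _ _
  have h1' : lam i - lam 0 ≤ c * lam 0 := by
    have h := mul_le_mul_of_nonneg_right h1 hpos.le
    rw [sub_mul, div_mul_cancel₀ _ (ne_of_gt hpos), one_mul] at h
    linarith
  have h2' : lam (Fin.last n) - lam i ≤ c * lam (Fin.last n) := by
    have h := mul_le_mul_of_nonneg_right h2 hLn.le
    rw [sub_mul, div_mul_cancel₀ _ (ne_of_gt hLn), one_mul] at h
    linarith
  have key_up : ∀ j, lam j - lam i ≤ c * lam j := by
    intro j
    have hj0 : 0 < lam j := lt_of_lt_of_le hpos (hmono (Fin.zero_le j))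
    have hjn : lam j ≤ lam (Fin.last n) := hmono (Fin.le_last j)
    have hi0 : lam 0 ≤ lam i := hmono (Fin.zero_le i)
    have h3 : lam j * (lam (Fin.last n) - lam i) ≤ lam j * (c * lam (Fin.last n)) :=
      mul_le_mul_of_nonneg_left h2' hj0.le
    have h4 : (lam j - lam i) * lam (Fin.last n) ≤ lam j * (lam (Fin.last n) - lam i) := by
      nlinarith
    have h5 : (lam j - lam i) * lam (Fin.last n) ≤ (c * lam j) * lam (Fin.last n) := by
      nlinarith
    exact le_of_mul_le_mul_right h5 hLn
  have key_low : ∀ j, -(c * lam j) ≤ lam j - lam i := by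
    intro j
    have hj0 : lam 0 ≤ lam j := hmono (Fin.zero_le j)
    have hi0 : lam 0 ≤ lam i := hmono (Fin.zero_le i)
    have h4 : (lam i - lam j) * lam 0 ≤ lam j * (lam i - lam 0) := by nlinarith
    have h5 : (lam i - lam j) * lam 0 ≤ (c * lam j) * lam 0 := by nlinarith
    have := le_of_mul_le_mul_right h5 hpos
    linarith
  rw [abs_le]
  constructor
  · have h := Finset.sum_le_sum (s := Finset.univ)
      (f := fun j => -(c * (lam j * w j))) (g := fun j => (lam j - lam i) * w j)
      fun j _ => by nlinarith [key_low j, hw j]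
    have e : ∑ j, -(c * (lam j * w j)) = -(c * ∑ j, lam j * w j) := by
      rw [Finset.mul_sum, ← Finset.sum_neg_distrib]
    rw [e] at h
    linarith
  · have : ∑ j, (lam j - lam i) * w j ≤ ∑ j, c * (lam j * w j) :=
      Finset.sum_le_sum fun j _ => by nlinarith [key_up j, hw j]
    rw [← Finset.mul_sum] at this
    linarith

private lemma bb_aux_B {n : ℕ} (lam : Fin (n + 1) → ℝ) (hpos : 0 < lam 0)
    (hmono : Monotone lam) (i : Fin (n + 1)) (w : Fin (n + 1) → ℝ)
    (hw : ∀ j, 0 ≤ w j) :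
    |∑ j, (lam j - lam i) * w j| ≤
      max ((1 - lam 0 / lam (Fin.last n)) * ∑ j, lam j * w j)
        (lam 0 * (max (lam i / lam 0 - 1) (1 - lam i / lam (Fin.last n))) *
          ∑ j ∈ Finset.Iio i, w j) := by
  set c := max (lam i / lam 0 - 1) (1 - lam i / lam (Fin.last n)) with hc
  have hLn : 0 < lam (Fin.last n) := lt_of_lt_of_le hpos (hmono (Fin.zero_le _))
  have hθ'0 : 0 ≤ 1 - lam 0 / lam (Fin.last n) := by
    have : lam 0 / lam (Fin.last n) ≤ 1 := by
      rw [div_le_one hLn]; exact hmono (Fin.zero_le _)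
    linarith
  have h1 : lam i / lam 0 - 1 ≤ c := le_max_left _ _
  have h1' : lam i - lam 0 ≤ c * lam 0 := by
    have h := mul_le_mul_of_nonneg_right h1 hpos.le
    rw [sub_mul, div_mul_cancel₀ _ (ne_of_gt hpos), one_mul] at h
    linarith
  have hsplit : (∑ j ∈ Finset.Iio i, (lam j - lam i) * w j) +
      (∑ j ∈ (Finset.Iio i)ᶜ, (lam j - lam i) * w j) = ∑ j, (lam j - lam i) * w j :=
    Finset.sum_add_sum_compl _ _
  have hA1 : (∑ j ∈ Finset.Iio i, (lam j - lam i) * w j) ≤ 0 := by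
    apply Finset.sum_nonpos
    intro j hj
    have hj' : j < i := Finset.mem_Iio.mp hj
    have : lam j ≤ lam i := hmono hj'.le
    nlinarith [hw j]
  have hA2 : -(lam 0 * c * ∑ j ∈ Finset.Iio i, w j) ≤
      ∑ j ∈ Finset.Iio i, (lam j - lam i) * w j := by
    rw [Finset.mul_sum, ← Finset.sum_neg_distrib]
    apply Finset.sum_le_sum
    intro j hj
    have hj0 : lam 0 ≤ lam j := hmono (Fin.zero_le j)
    nlinarith [hw j]
  have hB1 : 0 ≤ ∑ j ∈ (Finset.Iio i)ᶜ, (lam j - lam i) * w j := by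
    apply Finset.sum_nonneg
    intro j hj
    have hj' : i ≤ j := by
      rw [Finset.mem_compl, Finset.mem_Iio, not_lt] at hj; exact hj
    have : lam i ≤ lam j := hmono hj'
    nlinarith [hw j]
  have hB2 : (∑ j ∈ (Finset.Iio i)ᶜ, (lam j - lam i) * w j) ≤
      (1 - lam 0 / lam (Fin.last n)) * ∑ j, lam j * w j := by
    have step1 : (∑ j ∈ (Finset.Iio i)ᶜ, (lam j - lam i) * w j) ≤
        ∑ j ∈ (Finset.Iio i)ᶜ, (1 - lam 0 / lam (Fin.last n)) * (lam j * w j) := by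
      apply Finset.sum_le_sum
      intro j hj
      have hj' : i ≤ j := by
        rw [Finset.mem_compl, Finset.mem_Iio, not_lt] at hj; exact hj
      have hij : lam i ≤ lam j := hmono hj'
      have hi0 : lam 0 ≤ lam i := hmono (Fin.zero_le i)
      have hjn : lam j ≤ lam (Fin.last n) := hmono (Fin.le_last j)
      have hkey : (lam j - lam i) * lam (Fin.last n) ≤
          (lam (Fin.last n) - lam 0) * lam j := by nlinarith
      have h6 : lam 0 * lam j / lam (Fin.last n) ≤ lam i := by
        rw [div_le_iff₀ hLn]; nlinarith
      have h7 : (1 - lam 0 / lam (Fin.last n)) * lam j =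
          lam j - lam 0 * lam j / lam (Fin.last n) := by ring
      have hkey2 : lam j - lam i ≤ (1 - lam 0 / lam (Fin.last n)) * lam j := by
        rw [h7]; linarith
      nlinarith [hw j]
    have step2 : (∑ j ∈ (Finset.Iio i)ᶜ, (1 - lam 0 / lam (Fin.last n)) * (lam j * w j)) ≤
        ∑ j, (1 - lam 0 / lam (Fin.last n)) * (lam j * w j) := by
      apply Finset.sum_le_sum_of_subset_of_nonneg (Finset.subset_univ _)
      intro j _ _
      have hj0 : 0 < lam j := lt_of_lt_of_le hpos (hmono (Fin.zero_le j))
      have := hw j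
      positivity
    have e2 : ∑ j, (1 - lam 0 / lam (Fin.last n)) * (lam j * w j) =
        (1 - lam 0 / lam (Fin.last n)) * ∑ j, lam j * w j := (Finset.mul_sum _ _ _).symm
    rw [e2] at step2
    calc (∑ j ∈ (Finset.Iio i)ᶜ, (lam j - lam i) * w j)
        ≤ ∑ j ∈ (Finset.Iio i)ᶜ, (1 - lam 0 / lam (Fin.last n)) * (lam j * w j) := step1
      _ ≤ (1 - lam 0 / lam (Fin.last n)) * ∑ j, lam j * w j := step2
  have hGnn : 0 ≤ lam 0 * c * ∑ j ∈ Finset.Iio i, w j := by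
    have hc0 : 0 ≤ c := by
      have hi0 : lam 0 ≤ lam i := hmono (Fin.zero_le i)
      have : 0 ≤ lam i / lam 0 - 1 := by
        rw [sub_nonneg, le_div_iff₀ hpos, one_mul]; exact hi0
      exact le_trans this h1
    have : 0 ≤ ∑ j ∈ Finset.Iio i, w j := Finset.sum_nonneg fun j _ => hw j
    positivity
  have hDnn : 0 ≤ (1 - lam 0 / lam (Fin.last n)) * ∑ j, lam j * w j := by
    apply mul_nonneg hθ'0
    apply Finset.sum_nonneg
    intro j _
    have hj0 : 0 < lam j := lt_of_lt_of_le hpos (hmono (Fin.zero_le j))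
    have := hw j
    positivity
  rw [abs_le]
  constructor
  · have := le_max_right ((1 - lam 0 / lam (Fin.last n)) * ∑ j, lam j * w j)
      (lam 0 * c * ∑ j ∈ Finset.Iio i, w j)
    linarith
  · have := le_max_left ((1 - lam 0 / lam (Fin.last n)) * ∑ j, lam j * w j)
      (lam 0 * c * ∑ j ∈ Finset.Iio i, w j)
    linarith


set_option maxHeartbeats 1000000 in
/-- Main theorem: For the BB method on a strongly convex quadratic with
condition number κ = λ_n/λ_1, each coefficient sequence satisfies |d_k^i| ≤ F_i θ^k for
all k ≥ 1, where θ = 1 - 1/κ and F_i is defined recursively by F_1 = |d_0^1| and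
F_i = max{|d_0^i|, |d_1^i|/θ, θ⁻² C² √(Σ_{j<i} F_j²)} with
C = max{λ_i/λ_1 - 1, 1 - λ_i/λ_n}. Hence the BB method converges R-linearly with
rate 1 - 1/κ. -/
theorem bb_r_linear_convergence {n : ℕ}
    (lam : Fin (n + 1) → ℝ) (hpos : 0 < lam 0) (hmono : Monotone lam)
    (κ θ : ℝ) (hκ : κ = lam (Fin.last n) / lam 0) (hθ : θ = 1 - 1 / κ)
    (d : ℕ → Fin (n + 1) → ℝ)
    (hrec : ∀ k, 1 ≤ k → ∀ i, d (k + 1) i = d k i *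
      ((∑ j, (lam j - lam i) * d (k - 1) j ^ 2) / (∑ j, lam j * d (k - 1) j ^ 2)))
    (hfirst : ∀ i, d 1 i = d 0 i *
      ((∑ j, (lam j - lam i) * d 0 j ^ 2) / (∑ j, lam j * d 0 j ^ 2)))
    (hnz : ∀ k, d k ≠ 0)
    (F : Fin (n + 1) → ℝ)
    (hF0 : F 0 = |d 0 0|)
    (hFi : ∀ i : Fin (n + 1), i ≠ 0 → F i =
      max (|d 0 i|) (max (|d 1 i| / θ)
        ((max (lam i / lam 0 - 1) (1 - lam i / lam (Fin.last n))) ^ 2 / θ ^ 2 *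
          Real.sqrt (∑ j ∈ Finset.Iio i, F j ^ 2)))) :
    ∀ k, 1 ≤ k → ∀ i, |d k i| ≤ F i * θ ^ k := by
  have hLn : 0 < lam (Fin.last n) := lt_of_lt_of_le hpos (hmono (Fin.zero_le _))
  have hθ' : θ = 1 - lam 0 / lam (Fin.last n) := by
    rw [hθ, hκ, one_div_div]
  have hθnn : 0 ≤ θ := by
    rw [hθ']
    have : lam 0 / lam (Fin.last n) ≤ 1 := by
      rw [div_le_one hLn]; exact hmono (Fin.zero_le _)
    linarith
  have hFnn : ∀ j, 0 ≤ F j := by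
    intro j
    rcases eq_or_ne j 0 with rfl | h
    · rw [hF0]; exact abs_nonneg _
    · rw [hFi j h]; exact le_trans (abs_nonneg _) (le_max_left _ _)
  have hF0d : ∀ j, |d 0 j| ≤ F j := by
    intro j
    rcases eq_or_ne j 0 with rfl | h
    · rw [hF0]
    · rw [hFi j h]; exact le_max_left _ _
  have hDpos : ∀ k, 0 < ∑ j, lam j * d k j ^ 2 := by
    intro k
    obtain ⟨j0, hj0'⟩ := Function.ne_iff.mp (hnz k)
    have hj0 : d k j0 ≠ 0 := by simpa using hj0'
    refine Finset.sum_pos' (fun j _ => ?_) ⟨j0, Finset.mem_univ _, ?_⟩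
    · have : 0 < lam j := lt_of_lt_of_le hpos (hmono (Fin.zero_le j))
      positivity
    · have h1 : 0 < lam j0 := lt_of_lt_of_le hpos (hmono (Fin.zero_le j0))
      have h2 : 0 < d k j0 ^ 2 := by
        rcases lt_or_gt_of_ne hj0 with h | h
        · nlinarith
        · nlinarith
      exact mul_pos h1 h2
  have heq2 : ∀ k i, d (k + 2) i = d (k + 1) i *
      ((∑ j, (lam j - lam i) * d k j ^ 2) / (∑ j, lam j * d k j ^ 2)) := by
    intro k i
    have h := hrec (k + 1) (by omega) i
    simpa using h
  have hDi : ∀ k (i : Fin (n + 1)), lam 0 * d k i ^ 2 ≤ ∑ j, lam j * d k j ^ 2 := by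
    intro k i
    have h1 : lam i * d k i ^ 2 ≤ ∑ j, lam j * d k j ^ 2 :=
      Finset.single_le_sum (f := fun j => lam j * d k j ^ 2)
        (fun j _ => by
          have : 0 < lam j := lt_of_lt_of_le hpos (hmono (Fin.zero_le j))
          positivity)
        (Finset.mem_univ i)
    have h2 : lam 0 * d k i ^ 2 ≤ lam i * d k i ^ 2 :=
      mul_le_mul_of_nonneg_right (hmono (Fin.zero_le i)) (sq_nonneg _)
    linarith
  rcases eq_or_lt_of_le hθnn with hθz | hθpos
  · -- θ = 0 : all eigenvalues equal, all d k = 0 for k ≥ 1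
    have hconst : ∀ j, lam j = lam 0 := by
      intro j
      have h1 : lam 0 / lam (Fin.last n) = 1 := by rw [hθ'] at hθz; linarith
      have h2 : lam 0 = lam (Fin.last n) := by
        field_simp at h1; linarith
      have := hmono (Fin.zero_le j)
      have := hmono (Fin.le_last j)
      linarith
    have hzero : ∀ k (i : Fin (n + 1)), d (k + 1) i = 0 := by
      intro k i
      have hnum : ∀ w : Fin (n + 1) → ℕ → ℝ, True := fun _ => trivial
      have hnum0 : ∀ p, (∑ j, (lam j - lam i) * d p j ^ 2) = 0 := by
        intro p
        apply Finset.sum_eq_zero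
        intro j _
        rw [hconst j, hconst i]; ring
      cases k with
      | zero => rw [hfirst i, hnum0, zero_div, mul_zero]
      | succ m => rw [heq2 m i, hnum0, zero_div, mul_zero]
    intro k hk i
    obtain ⟨k', rfl⟩ : ∃ k', k = k' + 1 := ⟨k - 1, by omega⟩
    rw [hzero k' i, abs_zero, ← hθz, zero_pow (by omega), mul_zero]
  · -- θ > 0 : main argument
    have main : ∀ m : ℕ, ∀ i : Fin (n + 1), (i : ℕ) = m → ∀ k, |d k i| ≤ F i * θ ^ k := by
      intro m
      induction m using Nat.strong_induction_on with
      | _ m IHm =>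
        intro i him
        have IH : ∀ j : Fin (n + 1), j < i → ∀ k, |d k j| ≤ F j * θ ^ k := by
          intro j hj k
          exact IHm (j : ℕ) (by rw [← him]; exact hj) j rfl k
        clear IHm him
        set c := max (lam i / lam 0 - 1) (1 - lam i / lam (Fin.last n)) with hcdef
        have hc0 : 0 ≤ c := by
          have hi0 : lam 0 ≤ lam i := hmono (Fin.zero_le i)
          have : 0 ≤ lam i / lam 0 - 1 := by
            rw [sub_nonneg, le_div_iff₀ hpos, one_mul]; exact hi0
          exact le_trans this (le_max_left _ _)
        set S := ∑ j ∈ Finset.Iio i, F j ^ 2 with hSdef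
        have hS0 : 0 ≤ S := Finset.sum_nonneg fun j _ => sq_nonneg _
        have hFS : c ^ 2 / θ ^ 2 * Real.sqrt S ≤ F i := by
          rcases eq_or_ne i 0 with rfl | h
          · have he : Finset.Iio (0 : Fin (n + 1)) = ∅ := by
              ext j; simp
            rw [hSdef, he]
            simp [hFnn 0]
          · rw [hFi i h]
            exact le_trans (le_max_right _ _) (le_max_right _ _)
        have hF1i : |d 1 i| ≤ F i * θ := by
          rcases eq_or_ne i 0 with rfl | h
          · -- i = 0 : use split bound with empty Iio
            have hB := bb_aux_B lam hpos hmono 0 (fun j => d 0 j ^ 2) (fun j => sq_nonneg _)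
            have he : Finset.Iio (0 : Fin (n + 1)) = ∅ := by ext j; simp
            rw [he, Finset.sum_empty, mul_zero] at hB
            have hDp := hDpos 0
            have hmax : max ((1 - lam 0 / lam (Fin.last n)) * ∑ j, lam j * d 0 j ^ 2) 0 =
                (1 - lam 0 / lam (Fin.last n)) * ∑ j, lam j * d 0 j ^ 2 := by
              apply max_eq_left
              have : 0 ≤ 1 - lam 0 / lam (Fin.last n) := by rw [← hθ']; exact hθnn
              positivity
            rw [hmax, ← hθ'] at hB
            rw [hfirst 0, abs_mul, abs_div, abs_of_pos hDp]
            calc |d 0 0| * (|∑ j, (lam j - lam 0) * d 0 j ^ 2| / ∑ j, lam j * d 0 j ^ 2)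
                ≤ |d 0 0| * θ := by
                  apply mul_le_mul_of_nonneg_left _ (abs_nonneg _)
                  rw [div_le_iff₀ hDp]
                  linarith
              _ ≤ F 0 * θ := mul_le_mul_of_nonneg_right (hF0d 0) hθnn
          · rw [hFi i h]
            have h1 : |d 1 i| / θ ≤ max (|d 0 i|) (max (|d 1 i| / θ)
                (c ^ 2 / θ ^ 2 * Real.sqrt S)) :=
              le_trans (le_max_left _ _) (le_max_right _ _)
            rw [div_le_iff₀ hθpos] at h1
            exact h1
        -- contraction by c at every step
        have hcontr : ∀ k, |d (k + 1) i| ≤ c * |d k i| := by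
          intro k
          obtain ⟨p, hp⟩ : ∃ p, d (k + 1) i = d k i *
              ((∑ j, (lam j - lam i) * d p j ^ 2) / (∑ j, lam j * d p j ^ 2)) := by
            cases k with
            | zero => exact ⟨0, hfirst i⟩
            | succ m => exact ⟨m, heq2 m i⟩
          have hA := bb_aux_A lam hpos hmono i (fun j => d p j ^ 2) (fun j => sq_nonneg _)
          have hDp := hDpos p
          rw [hp, abs_mul, abs_div, abs_of_pos hDp]
          calc |d k i| * (|∑ j, (lam j - lam i) * d p j ^ 2| / ∑ j, lam j * d p j ^ 2)
              ≤ |d k i| * c := by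
                apply mul_le_mul_of_nonneg_left _ (abs_nonneg _)
                rw [div_le_iff₀ hDp]
                exact hA
            _ = c * |d k i| := mul_comm _ _
        intro k
        induction k using Nat.strong_induction_on with
        | _ k ihk =>
          match k with
          | 0 => simpa using hF0d i
          | 1 => simpa using hF1i
          | (m + 2) =>
            have ih1 : |d (m + 1) i| ≤ F i * θ ^ (m + 1) := ihk (m + 1) (by omega)
            have ih0 : |d m i| ≤ F i * θ ^ m := ihk m (by omega)
            by_cases hdm : d m i = 0
            · have h1 : d (m + 1) i = 0 := by
                have := hcontr m
                rw [hdm] at this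
                simp only [abs_zero, mul_zero] at this
                exact abs_eq_zero.mp (le_antisymm this (abs_nonneg _))
              have h2 : d (m + 2) i = 0 := by
                rw [heq2 m i, h1, zero_mul]
              rw [h2, abs_zero]
              exact mul_nonneg (hFnn i) (by positivity)
            · have hG : (∑ j ∈ Finset.Iio i, d m j ^ 2) ≤ S * (θ ^ m) ^ 2 := by
                rw [hSdef, Finset.sum_mul]
                apply Finset.sum_le_sum
                intro j hj
                have hj' : j < i := Finset.mem_Iio.mp hj
                have hIHj := IH j hj' m
                calc d m j ^ 2 = |d m j| ^ 2 := (sq_abs _).symm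
                  _ ≤ (F j * θ ^ m) ^ 2 := by
                      apply pow_le_pow_left₀ (abs_nonneg _) hIHj
                  _ = F j ^ 2 * (θ ^ m) ^ 2 := mul_pow _ _ _
              have hGnn : 0 ≤ ∑ j ∈ Finset.Iio i, d m j ^ 2 :=
                Finset.sum_nonneg fun j _ => sq_nonneg _
              have hDp := hDpos m
              have hB := bb_aux_B lam hpos hmono i (fun j => d m j ^ 2) (fun j => sq_nonneg _)
              rw [← hθ'] at hB
              rw [heq2 m i, abs_mul, abs_div, abs_of_pos hDp]
              set N := ∑ j, (lam j - lam i) * d m j ^ 2 with hNdef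
              set D := ∑ j, lam j * d m j ^ 2 with hDdef
              set G := ∑ j ∈ Finset.Iio i, d m j ^ 2 with hGdef
              rcases le_or_gt |N| (θ * D) with hcase | hcase
              · calc |d (m + 1) i| * (|N| / D)
                    ≤ (F i * θ ^ (m + 1)) * θ := by
                      apply mul_le_mul ih1 _ (by positivity)
                        (mul_nonneg (hFnn i) (by positivity))
                      rw [div_le_iff₀ hDp]
                      linarith
                  _ = F i * θ ^ (m + 2) := by ring
              · have hNG : |N| ≤ lam 0 * c * G := by
                  rcases le_max_iff.mp hB with h | h
                  · linarith
                  · exact h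
                have hDlow : lam 0 * d m i ^ 2 ≤ D := hDi m i
                have habs : 0 < |d m i| := abs_pos.mpr hdm
                have hsq : d m i ^ 2 = |d m i| ^ 2 := (sq_abs _).symm
                have hfinal : c ^ 2 * Real.sqrt S * θ ^ m ≤ F i * θ ^ (m + 2) := by
                  have : c ^ 2 / θ ^ 2 * Real.sqrt S * θ ^ (m + 2) =
                      c ^ 2 * Real.sqrt S * θ ^ m := by
                    field_simp
                    ring
                  rw [← this]
                  exact mul_le_mul_of_nonneg_right hFS (by positivity)
                rcases le_or_gt (Real.sqrt S * θ ^ m) |d m i| with hbig | hsmall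
                · -- B1
                  have hrtnn : 0 ≤ Real.sqrt S * θ ^ m := by positivity
                  have hG2 : G ≤ |d m i| * (Real.sqrt S * θ ^ m) := by
                    have h1 : S * (θ ^ m) ^ 2 = (Real.sqrt S * θ ^ m) ^ 2 := by
                      rw [mul_pow, Real.sq_sqrt hS0]
                    have h2 : (Real.sqrt S * θ ^ m) ^ 2 ≤ |d m i| * (Real.sqrt S * θ ^ m) := by
                      rw [sq]
                      exact mul_le_mul_of_nonneg_right hbig hrtnn
                    calc G ≤ S * (θ ^ m) ^ 2 := hG
                      _ = (Real.sqrt S * θ ^ m) ^ 2 := h1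
                      _ ≤ |d m i| * (Real.sqrt S * θ ^ m) := h2
                  have hNd : |N| / D ≤ c * G / d m i ^ 2 := by
                    have hd2 : 0 < d m i ^ 2 := by positivity
                    have hld : 0 < lam 0 * d m i ^ 2 := by positivity
                    calc |N| / D ≤ (lam 0 * c * G) / (lam 0 * d m i ^ 2) := by
                          apply div_le_div₀ (by positivity) hNG hld hDlow
                      _ = c * G / d m i ^ 2 := by
                          rw [mul_assoc, mul_div_mul_left _ _ (ne_of_gt hpos)]
                  calc |d (m + 1) i| * (|N| / D)
                      ≤ (c * |d m i|) * (c * G / d m i ^ 2) := by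
                        apply mul_le_mul (hcontr m) hNd (by positivity)
                          (by positivity)
                    _ = c ^ 2 * (G / |d m i|) := by
                        field_simp [habs.ne']; rw [hsq]; ring
                    _ ≤ c ^ 2 * (Real.sqrt S * θ ^ m) := by
                        apply mul_le_mul_of_nonneg_left _ (by positivity)
                        rw [div_le_iff₀ habs]
                        calc G ≤ |d m i| * (Real.sqrt S * θ ^ m) := hG2
                          _ = Real.sqrt S * θ ^ m * |d m i| := mul_comm _ _
                    _ = c ^ 2 * Real.sqrt S * θ ^ m := by ring
                    _ ≤ F i * θ ^ (m + 2) := hfinal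
                · -- B2
                  have hA := bb_aux_A lam hpos hmono i (fun j => d m j ^ 2) (fun j => sq_nonneg _)
                  calc |d (m + 1) i| * (|N| / D)
                      ≤ (c * |d m i|) * c := by
                        apply mul_le_mul (hcontr m) _ (by positivity) (by positivity)
                        rw [div_le_iff₀ hDp]
                        exact hA
                    _ = c ^ 2 * |d m i| := by ring
                    _ ≤ c ^ 2 * (Real.sqrt S * θ ^ m) := by
                        apply mul_le_mul_of_nonneg_left hsmall.le (by positivity)
                    _ = c ^ 2 * Real.sqrt S * θ ^ m := by ring
                    _ ≤ F i * θ ^ (m + 2) := hfinal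
    intro k _ i
    exact main (i : ℕ) i rfl k
end

section
/- Shrink-or-large dichotomy: for any i and k, either (i) Σ_j (λ_j - λ_i)(d_{k-1}^j)^2 ≥ 0 or (ii) Σ_j (λ_j - λ_i)(d_{k-1}^j)^2 < 0 together with Σ_{j<i}(λ_i - λ_j)(d_{k-1}^j)^2 > Σ_{j>i}(λ_j - λ_i)(d_{k-1}^j)^2; in case (ii), if moreover (d_{k-1}^i)^2 < Σ_{j<i}(d_{k-1}^j)^2 fails, then |d_{k+1}^i| ≤ (1-1/κ)|d_k^i|. -/
lemma bb_sum_split {n : ℕ} (f : Fin (n + 1) → ℝ) (i : Fin (n + 1)) :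
    ∑ j, f j = ∑ j ∈ Finset.Iio i, f j + f i + ∑ j ∈ Finset.Ioi i, f j := by
  have hu : Finset.Iio i ∪ Finset.Ici i = (Finset.univ : Finset (Fin (n + 1))) := by
    ext j; simp [lt_or_ge j i]
  have hd : Disjoint (Finset.Iio i) (Finset.Ici i) := by
    simp [Finset.disjoint_left]
  rw [← hu, Finset.sum_union hd, ← Finset.add_sum_Ioi_eq_sum_Ici]
  ring

/-- Shrink-or-large dichotomy: for any i and k, either the shrinking mode
condition Σ_j (λ_j - λ_i)(d_{k-1}^j)² ≥ 0 holds, or it is negative together with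
Σ_{j<i}(λ_i - λ_j)(d_{k-1}^j)² > Σ_{j>i}(λ_j - λ_i)(d_{k-1}^j)²; and in the latter case,
if moreover (d_{k-1}^i)² ≥ Σ_{j<i}(d_{k-1}^j)², then |d_{k+1}^i| ≤ (1-1/κ)|d_k^i|. -/
theorem bb_shrink_or_large_dichotomy {n : ℕ}
    (lam : Fin (n + 1) → ℝ) (hpos : 0 < lam 0) (hmono : Monotone lam)
    (κ : ℝ) (hκ : κ = lam (Fin.last n) / lam 0)
    (d : ℕ → Fin (n + 1) → ℝ) (k : ℕ) (hk : 1 ≤ k) (hnz : d (k - 1) ≠ 0)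
    (hrec : ∀ i, d (k + 1) i = d k i *
      ((∑ j, (lam j - lam i) * d (k - 1) j ^ 2) / (∑ j, lam j * d (k - 1) j ^ 2)))
    (i : Fin (n + 1)) :
    (0 ≤ ∑ j, (lam j - lam i) * d (k - 1) j ^ 2 ∨
      ((∑ j, (lam j - lam i) * d (k - 1) j ^ 2) < 0 ∧
        ∑ j ∈ Finset.Ioi i, (lam j - lam i) * d (k - 1) j ^ 2 <
          ∑ j ∈ Finset.Iio i, (lam i - lam j) * d (k - 1) j ^ 2)) ∧
    ((∑ j, (lam j - lam i) * d (k - 1) j ^ 2) < 0 →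
      ∑ j ∈ Finset.Iio i, d (k - 1) j ^ 2 ≤ d (k - 1) i ^ 2 →
      |d (k + 1) i| ≤ (1 - 1 / κ) * |d k i|) := by
  set e := d (k - 1) with he
  set S := ∑ j, (lam j - lam i) * e j ^ 2 with hS
  set T := ∑ j, lam j * e j ^ 2 with hT
  set A := ∑ j ∈ Finset.Ioi i, (lam j - lam i) * e j ^ 2 with hA
  set B := ∑ j ∈ Finset.Iio i, (lam i - lam j) * e j ^ 2 with hB
  have hlam : ∀ j, 0 < lam j := fun j => hpos.trans_le (hmono (Fin.zero_le j))
  have hAnn : 0 ≤ A :=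
    Finset.sum_nonneg fun j hj =>
      mul_nonneg (sub_nonneg.2 (hmono (le_of_lt (Finset.mem_Ioi.mp hj)))) (sq_nonneg _)
  have hBnn : 0 ≤ B :=
    Finset.sum_nonneg fun j hj =>
      mul_nonneg (sub_nonneg.2 (hmono (le_of_lt (Finset.mem_Iio.mp hj)))) (sq_nonneg _)
  have hsplit : S = A - B := by
    have hneg : ∑ j ∈ Finset.Iio i, (lam j - lam i) * e j ^ 2 = -B := by
      rw [hB, ← Finset.sum_neg_distrib]
      exact Finset.sum_congr rfl fun j _ => by ring
    rw [hS, bb_sum_split (fun j => (lam j - lam i) * e j ^ 2) i, hneg]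
    ring
  have hTpos : 0 < T := by
    obtain ⟨j0, hj0⟩ := Function.ne_iff.mp hnz
    have hj0' : e j0 ≠ 0 := by simpa using hj0
    refine Finset.sum_pos' (fun j _ => mul_nonneg (hlam j).le (sq_nonneg _))
      ⟨j0, Finset.mem_univ _, mul_pos (hlam j0) (by positivity)⟩
  constructor
  · rcases le_or_gt 0 S with h | h
    · exact Or.inl h
    · exact Or.inr ⟨h, by linarith⟩
  · intro hSneg hle
    have hB2 : B ≤ (lam i - lam 0) * e i ^ 2 := by
      have h1 : B ≤ (lam i - lam 0) * ∑ j ∈ Finset.Iio i, e j ^ 2 := by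
        rw [Finset.mul_sum]
        refine Finset.sum_le_sum fun j _ => ?_
        exact mul_le_mul_of_nonneg_right
          (sub_le_sub_left (hmono (Fin.zero_le j)) _) (sq_nonneg _)
      refine h1.trans ?_
      exact mul_le_mul_of_nonneg_left hle (sub_nonneg.2 (hmono (Fin.zero_le i)))
    have hei : e i ≠ 0 := by
      intro h
      rw [h] at hB2
      norm_num at hB2
      linarith
    have heipos : 0 < e i ^ 2 := by positivity
    have hTi : lam i * e i ^ 2 ≤ T :=
      Finset.single_le_sum (f := fun j => lam j * e j ^ 2)
        (fun j _ => mul_nonneg (hlam j).le (sq_nonneg _)) (Finset.mem_univ i)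
    have habs : |S| ≤ (lam i - lam 0) * e i ^ 2 := by
      rw [abs_of_neg hSneg]; linarith
    have hdenpos : 0 < lam i * e i ^ 2 := mul_pos (hlam i) heipos
    have key : |S| / T ≤ 1 - 1 / κ := by
      have h1 : |S| / T ≤ |S| / (lam i * e i ^ 2) :=
        div_le_div_of_nonneg_left (abs_nonneg _) hdenpos hTi
      have h2 : |S| / (lam i * e i ^ 2) ≤ ((lam i - lam 0) * e i ^ 2) / (lam i * e i ^ 2) := by
        gcongr
      have h3 : ((lam i - lam 0) * e i ^ 2) / (lam i * e i ^ 2) = 1 - lam 0 / lam i := by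
        rw [mul_comm (lam i) (e i ^ 2), mul_comm (lam i - lam 0) (e i ^ 2),
          mul_div_mul_left _ _ (pow_ne_zero 2 hei), sub_div, div_self (hlam i).ne']
      have h4 : lam 0 / lam (Fin.last n) ≤ lam 0 / lam i :=
        div_le_div_of_nonneg_left hpos.le (hlam i) (hmono (Fin.le_last i))
      have h5 : 1 / κ = lam 0 / lam (Fin.last n) := by
        rw [hκ, one_div_div]
      linarith
    have hnn : 0 ≤ 1 - 1 / κ := le_trans (by positivity) key
    rw [hrec i, abs_mul, abs_div, abs_of_pos hTpos, mul_comm]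
    exact mul_le_mul_of_nonneg_right key (abs_nonneg _)
end

section
/- Ratio bound in fluctuation mode with dominant coefficient: if Σ_j (λ_j - λ_i)(d_{k-1}^j)^2 < 0 and (d_{k-1}^i)^2 ≥ Σ_{j<i}(d_{k-1}^j)^2, then |Σ_j (λ_j - λ_i)(d_{k-1}^j)^2| / (Σ_j λ_j (d_{k-1}^j)^2) ≤ 1 - λ_1/λ_i. -/
/-- Ratio bound in fluctuation mode with dominant coefficient: if
Σ_j (λ_j - λ_i) d_j² < 0 and d_i² ≥ Σ_{j<i} d_j², then
|Σ_j (λ_j - λ_i) d_j²| / (Σ_j λ_j d_j²) ≤ 1 - λ_1/λ_i. -/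
theorem bb_fluctuation_ratio_bound {n : ℕ}
    (lam : Fin (n + 1) → ℝ) (hpos : 0 < lam 0) (hmono : Monotone lam)
    (d : Fin (n + 1) → ℝ) (hd : d ≠ 0) (i : Fin (n + 1))
    (hfluct : ∑ j, (lam j - lam i) * d j ^ 2 < 0)
    (hdom : ∑ j ∈ Finset.Iio i, d j ^ 2 ≤ d i ^ 2) :
    |∑ j, (lam j - lam i) * d j ^ 2| / (∑ j, lam j * d j ^ 2) ≤ 1 - lam 0 / lam i := by
  set S := ∑ j, lam j * d j ^ 2 with hS
  set D := ∑ j, d j ^ 2 with hD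
  set A := ∑ j ∈ Finset.Iio i, d j ^ 2 with hA
  set B := ∑ j ∈ (Finset.Iio i)ᶜ, d j ^ 2 with hB
  have hiI : lam 0 ≤ lam i := hmono (Fin.zero_le i)
  have hiPos : 0 < lam i := lt_of_lt_of_le hpos hiI
  have hT : ∑ j, (lam j - lam i) * d j ^ 2 = S - lam i * D := by
    simp [hS, hD, sub_mul, Finset.sum_sub_distrib, Finset.mul_sum]
  have hDsplit : A + B = D := Finset.sum_add_sum_compl (Finset.Iio i) _
  have hBnn : 0 ≤ B := Finset.sum_nonneg fun j _ => sq_nonneg _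
  have hAnn : 0 ≤ A := Finset.sum_nonneg fun j _ => sq_nonneg _
  -- key: lam 0 * A + lam i * B ≤ S
  have hkey : lam 0 * A + lam i * B ≤ S := by
    have h1 : ∑ j ∈ Finset.Iio i, lam 0 * d j ^ 2 ≤ ∑ j ∈ Finset.Iio i, lam j * d j ^ 2 :=
      Finset.sum_le_sum fun j _ => mul_le_mul_of_nonneg_right (hmono (Fin.zero_le j)) (sq_nonneg _)
    have h2 : ∑ j ∈ (Finset.Iio i)ᶜ, lam i * d j ^ 2 ≤ ∑ j ∈ (Finset.Iio i)ᶜ, lam j * d j ^ 2 := by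
      refine Finset.sum_le_sum fun j hj => mul_le_mul_of_nonneg_right (hmono ?_) (sq_nonneg _)
      simpa using hj
    have h3 : (∑ j ∈ Finset.Iio i, lam j * d j ^ 2) +
        ∑ j ∈ (Finset.Iio i)ᶜ, lam j * d j ^ 2 = S :=
      Finset.sum_add_sum_compl (Finset.Iio i) _
    calc lam 0 * A + lam i * B
        = (∑ j ∈ Finset.Iio i, lam 0 * d j ^ 2) + ∑ j ∈ (Finset.Iio i)ᶜ, lam i * d j ^ 2 := by
          rw [hA, hB, Finset.mul_sum, Finset.mul_sum]
      _ ≤ S := by rw [← h3]; exact add_le_add h1 h2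
  -- B ≥ d i ^ 2 ≥ A
  have hBi : d i ^ 2 ≤ B := by
    refine Finset.single_le_sum (f := fun j => d j ^ 2) (fun j _ => sq_nonneg _) ?_
    simp
  have hAB : A ≤ B := le_trans hdom hBi
  have hfl : S - lam i * D < 0 := hT ▸ hfluct
  -- numerator bound
  have hnum : lam i * D - S ≤ (lam i - lam 0) * A := by nlinarith [hDsplit]
  have hApos : 0 < A := by nlinarith
  have hSA : lam i * A ≤ S := by nlinarith
  have hSpos : 0 < S := lt_of_lt_of_le (by positivity) hSA
  rw [hT, abs_of_neg hfl, div_le_iff₀ hSpos]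
  have hgoal : (1 - lam 0 / lam i) * S = ((lam i - lam 0) * S) / lam i := by
    field_simp
  rw [hgoal, le_div_iff₀ hiPos]
  nlinarith [mul_le_mul_of_nonneg_left hSA (sub_nonneg.mpr hiI)]
end

section
/- (Lower bound example) For any A ∈ S^n_{++} with smallest and largest eigenvalues λ_1 < λ_n and corresponding unit eigenvectors v_1, v_n, choosing x_0 = A^{-1}(c + v_1 + v_n) for the problem min (1/2)x^T A x - c^T x, the BB iterates satisfy ‖g_k‖ ≥ ((κ-1)/(κ+1))^k ‖g_0‖ for all k, where κ = λ_n/λ_1. -/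
open Matrix

/-- Lower bound example: For any positive definite A with smallest and
largest eigenvalues λ_1 < λ_n and corresponding unit eigenvectors v_1, v_n, choosing
x_0 = A⁻¹(c + v_1 + v_n) for min (1/2)xᵀAx - cᵀx, the BB iterates satisfy
‖g_k‖ ≥ ((κ-1)/(κ+1))^k ‖g_0‖ for all k, where κ = λ_n/λ_1. -/
theorem bb_lower_bound_example {n : ℕ}
    (A : Matrix (Fin n) (Fin n) ℝ) (hA : A.PosDef) (c : Fin n → ℝ)
    (lam1 lamn : ℝ) (hlam1 : 0 < lam1) (hlt : lam1 < lamn)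
    (v1 vn : Fin n → ℝ)
    (hv1 : A.mulVec v1 = lam1 • v1) (hvn : A.mulVec vn = lamn • vn)
    (hu1 : v1 ⬝ᵥ v1 = 1) (hun : vn ⬝ᵥ vn = 1) (horth : v1 ⬝ᵥ vn = 0)
    (hext : ∀ z : Fin n → ℝ,
      lam1 * (z ⬝ᵥ z) ≤ z ⬝ᵥ A.mulVec z ∧ z ⬝ᵥ A.mulVec z ≤ lamn * (z ⬝ᵥ z))
    (x g : ℕ → Fin n → ℝ) (α : ℕ → ℝ)
    (hg : ∀ k, g k = A.mulVec (x k) - c)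
    (hx0 : A.mulVec (x 0) = c + v1 + vn)
    (hx : ∀ k, x (k + 1) = x k - α k • g k)
    (hα0 : α 0 = (g 0 ⬝ᵥ g 0) / (g 0 ⬝ᵥ A.mulVec (g 0)))
    (hα : ∀ k, α (k + 1) = (g k ⬝ᵥ g k) / (g k ⬝ᵥ A.mulVec (g k))) :
    ∀ k, ((lamn / lam1 - 1) / (lamn / lam1 + 1)) ^ k * Real.sqrt (g 0 ⬝ᵥ g 0) ≤
      Real.sqrt (g k ⬝ᵥ g k) := by
  have hlamn : 0 < lamn := hlam1.trans hlt
  have hs : 0 < lam1 + lamn := by linarith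
  set ρ : ℝ := (lamn - lam1) / (lamn + lam1) with hρdef
  have hρpos : 0 < ρ := by apply div_pos <;> linarith
  have hvn1 : vn ⬝ᵥ v1 = 0 := by rw [dotProduct_comm]; exact horth
  have hdot : ∀ s t s' t' : ℝ,
      (s • v1 + t • vn) ⬝ᵥ (s' • v1 + t' • vn) = s * s' + t * t' := by
    intro s t s' t'
    simp only [dotProduct_add, add_dotProduct, smul_dotProduct, dotProduct_smul,
      smul_eq_mul, hu1, hun, horth, hvn1]
    ring
  have hAg : ∀ s t : ℝ, A.mulVec (s • v1 + t • vn) = (s * lam1) • v1 + (t * lamn) • vn := by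
    intro s t
    rw [Matrix.mulVec_add, Matrix.mulVec_smul, Matrix.mulVec_smul, hv1, hvn,
      smul_smul, smul_smul]
  have hsq : ∀ j : ℕ, (-ρ) ^ j * (-ρ) ^ j = ρ ^ j * ρ ^ j := by
    intro j
    rw [← pow_add, ← pow_add]
    exact (Even.add_self j).neg_pow ρ
  have h1 : 2 / (lam1 + lamn) * lam1 = 1 - ρ := by
    rw [hρdef]
    field_simp
    ring
  have h2 : 2 / (lam1 + lamn) * lamn = 1 + ρ := by
    rw [hρdef]
    field_simp
    ring
  have key : ∀ k, g k = ρ ^ k • v1 + (-ρ) ^ k • vn ∧ α k = 2 / (lam1 + lamn) := by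
    have hform : ∀ j : ℕ, g j = ρ ^ j • v1 + (-ρ) ^ j • vn →
        (g j ⬝ᵥ g j) / (g j ⬝ᵥ A.mulVec (g j)) = 2 / (lam1 + lamn) := by
      intro j hj
      rw [hj, hAg, hdot, hdot]
      rw [show (-ρ) ^ j * ((-ρ) ^ j * lamn) = ((-ρ) ^ j * (-ρ) ^ j) * lamn from by ring, hsq j]
      have hpow : (0:ℝ) < ρ ^ j * ρ ^ j := by positivity
      rw [show ρ ^ j * ρ ^ j + ρ ^ j * ρ ^ j = (ρ ^ j * ρ ^ j) * 2 from by ring,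
        show ρ ^ j * (ρ ^ j * lam1) + ρ ^ j * ρ ^ j * lamn
          = (ρ ^ j * ρ ^ j) * (lam1 + lamn) from by ring,
        mul_div_mul_left _ _ (ne_of_gt hpow)]
    have hbase0 : g 0 = ρ ^ 0 • v1 + (-ρ) ^ 0 • vn := by
      rw [hg 0, hx0]
      simp only [pow_zero, one_smul]
      abel
    intro k
    induction k with
    | zero => exact ⟨hbase0, by rw [hα0]; exact hform 0 hbase0⟩
    | succ k ih =>
      obtain ⟨ihg, ihα⟩ := ih
      have hstep : g (k + 1) = ρ ^ (k+1) • v1 + (-ρ) ^ (k+1) • vn := by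
        have hrec : g (k + 1) = g k - α k • A.mulVec (g k) := by
          rw [hg (k+1), hx k, Matrix.mulVec_sub, Matrix.mulVec_smul, hg k]
          abel
        rw [hrec, ihg, hAg, ihα]
        have c1 : ρ ^ k - (2 / (lam1 + lamn)) * (ρ ^ k * lam1) = ρ ^ (k+1) := by
          rw [pow_succ]
          linear_combination (-(ρ ^ k)) * h1
        have c2 : (-ρ) ^ k - (2 / (lam1 + lamn)) * ((-ρ) ^ k * lamn) = (-ρ) ^ (k+1) := by
          rw [pow_succ]
          linear_combination (-((-ρ) ^ k)) * h2
        rw [smul_add, smul_smul, smul_smul, ← c1, ← c2, sub_smul, sub_smul]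
        abel
      exact ⟨hstep, by rw [hα k]; exact hform k ihg⟩
  intro k
  have hbase : (lamn / lam1 - 1) / (lamn / lam1 + 1) = ρ := by
    rw [hρdef, div_eq_div_iff (by positivity) (by positivity)]
    field_simp
  have hg0 : g 0 ⬝ᵥ g 0 = 2 := by
    rw [(key 0).1, hdot]
    norm_num
  have hgk : g k ⬝ᵥ g k = (ρ ^ k) ^ 2 * 2 := by
    rw [(key k).1, hdot, hsq k]
    ring
  rw [hbase, hg0, hgk, Real.sqrt_mul (by positivity), Real.sqrt_sq (by positivity)]
end

section
/- Two-coordinate invariance: if the coefficient dynamics is supported on indices 1 and n (d_k^j = 0 for 1 < j < n) and (d_0^1)^2 = (d_0^n)^2, (d_1^1)^2 = (d_1^n)^2, then (d_k^1)^2 = (d_k^n)^2 for all k ≥ 0, and for k ≥ 1, d_{k+1}^1 = d_k^1 (λ_n - λ_1)/(λ_n + λ_1) and d_{k+1}^n = -d_k^n (λ_n - λ_1)/(λ_n + λ_1). -/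
/-- Two-coordinate invariance: if the BB coefficient dynamics is supported
on indices 1 and n and (d_0^1)² = (d_0^n)², (d_1^1)² = (d_1^n)², then (d_k^1)² = (d_k^n)²
for all k ≥ 0, and for k ≥ 1, d_{k+1}^1 = d_k^1 (λ_n-λ_1)/(λ_n+λ_1) and
d_{k+1}^n = -d_k^n (λ_n-λ_1)/(λ_n+λ_1). -/
theorem bb_two_coordinate_invariance (lam1 lamn : ℝ) (h1 : 0 < lam1) (hlt : lam1 < lamn)
    (a b : ℕ → ℝ)
    (hden : ∀ k, lam1 * a k ^ 2 + lamn * b k ^ 2 ≠ 0)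
    (hra : ∀ k, 1 ≤ k → a (k + 1) = a k *
      ((lamn - lam1) * b (k - 1) ^ 2 / (lam1 * a (k - 1) ^ 2 + lamn * b (k - 1) ^ 2)))
    (hrb : ∀ k, 1 ≤ k → b (k + 1) = b k *
      ((lam1 - lamn) * a (k - 1) ^ 2 / (lam1 * a (k - 1) ^ 2 + lamn * b (k - 1) ^ 2)))
    (h0 : a 0 ^ 2 = b 0 ^ 2) (h1' : a 1 ^ 2 = b 1 ^ 2) :
    (∀ k, a k ^ 2 = b k ^ 2) ∧
    (∀ k, 1 ≤ k →
      a (k + 1) = a k * ((lamn - lam1) / (lamn + lam1)) ∧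
      b (k + 1) = -(b k * ((lamn - lam1) / (lamn + lam1)))) := by
  have hsum : lamn + lam1 ≠ 0 := by nlinarith
  -- step lemma: if a m ^2 = b m ^2 then the recursion at k = m+1 simplifies
  have step : ∀ m : ℕ, a m ^ 2 = b m ^ 2 →
      a (m + 2) = a (m + 1) * ((lamn - lam1) / (lamn + lam1)) ∧
      b (m + 2) = -(b (m + 1) * ((lamn - lam1) / (lamn + lam1))) := by
    intro m hm
    have ha2 : a m ^ 2 ≠ 0 := by
      intro h
      apply hden m
      rw [h, ← hm, h]; ring
    have hA := hra (m + 1) (by omega)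
    have hB := hrb (m + 1) (by omega)
    simp only [Nat.add_sub_cancel] at hA hB
    rw [← hm] at hA hB
    have hd : lam1 * a m ^ 2 + lamn * a m ^ 2 = (lamn + lam1) * a m ^ 2 := by ring
    rw [hd] at hA hB
    constructor
    · rw [hA, mul_div_mul_right _ _ ha2]
    · rw [hB, mul_div_mul_right _ _ ha2]; ring
  have key : ∀ k, a k ^ 2 = b k ^ 2 ∧ a (k + 1) ^ 2 = b (k + 1) ^ 2 := by
    intro k
    induction k with
    | zero => exact ⟨h0, h1'⟩
    | succ n ih =>
      refine ⟨ih.2, ?_⟩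
      obtain ⟨hA, hB⟩ := step n ih.1
      rw [hA, hB, neg_sq, mul_pow, mul_pow, ih.2]
  refine ⟨fun k => (key k).1, fun k hk => ?_⟩
  obtain ⟨m, rfl⟩ : ∃ m, k = m + 1 := ⟨k - 1, by omega⟩
  exact step m (key m).1
end

section
/- With d_0^1 = d_0^n = 1 and the first gradient-descent step, d_1^1 = (λ_n - λ_1)/(λ_n + λ_1) and d_1^n = -(λ_n - λ_1)/(λ_n + λ_1); and subsequently d_k^1 = ((κ-1)/(κ+1))^k, d_k^n = (-1)^k((κ-1)/(κ+1))^k for all k ≥ 0, where κ = λ_n/λ_1. -/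
/-- With d_0^1 = d_0^n = 1 and a first gradient-descent step,
d_1^1 = (λ_n-λ_1)/(λ_n+λ_1), d_1^n = -(λ_n-λ_1)/(λ_n+λ_1), and subsequently
d_k^1 = ((κ-1)/(κ+1))^k, d_k^n = (-1)^k ((κ-1)/(κ+1))^k for all k ≥ 0, κ = λ_n/λ_1. -/
theorem bb_example_exact_rate (lam1 lamn : ℝ) (h1 : 0 < lam1) (hlt : lam1 < lamn)
    (a b : ℕ → ℝ)
    (h0a : a 0 = 1) (h0b : b 0 = 1)
    (hfa : a 1 = a 0 * ((lamn - lam1) * b 0 ^ 2 / (lam1 * a 0 ^ 2 + lamn * b 0 ^ 2)))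
    (hfb : b 1 = b 0 * ((lam1 - lamn) * a 0 ^ 2 / (lam1 * a 0 ^ 2 + lamn * b 0 ^ 2)))
    (hra : ∀ k, 1 ≤ k → a (k + 1) = a k *
      ((lamn - lam1) * b (k - 1) ^ 2 / (lam1 * a (k - 1) ^ 2 + lamn * b (k - 1) ^ 2)))
    (hrb : ∀ k, 1 ≤ k → b (k + 1) = b k *
      ((lam1 - lamn) * a (k - 1) ^ 2 / (lam1 * a (k - 1) ^ 2 + lamn * b (k - 1) ^ 2))) :
    a 1 = (lamn - lam1) / (lamn + lam1) ∧
    b 1 = -((lamn - lam1) / (lamn + lam1)) ∧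
    (∀ k, a k = ((lamn / lam1 - 1) / (lamn / lam1 + 1)) ^ k ∧
      b k = (-1 : ℝ) ^ k * ((lamn / lam1 - 1) / (lamn / lam1 + 1)) ^ k) := by
  have hsum : (0:ℝ) < lamn + lam1 := by linarith
  have h1' : lam1 ≠ 0 := ne_of_gt h1
  have hs0 : lamn + lam1 ≠ 0 := ne_of_gt hsum
  have hs0' : lam1 + lamn ≠ 0 := by rw [add_comm]; exact hs0
  set r : ℝ := (lamn - lam1) / (lamn + lam1) with hr
  have hrpos : 0 < r := div_pos (by linarith) hsum
  have hkappa : (lamn / lam1 - 1) / (lamn / lam1 + 1) = r := by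
    rw [hr, div_sub' h1', div_add' _ _ _ h1', div_div_div_cancel_right₀]
    · ring_nf
    · exact h1'
  have ha1 : a 1 = r := by
    rw [hfa, h0a, h0b, hr]; ring_nf
  have hb1 : b 1 = -r := by
    rw [hfb, h0a, h0b, hr]; ring_nf
  have key : ∀ k, a k = r ^ k ∧ b k = (-1:ℝ) ^ k * r ^ k := by
    have step : ∀ k, (a k = r ^ k ∧ b k = (-1:ℝ) ^ k * r ^ k) ∧
        (a (k+1) = r ^ (k+1) ∧ b (k+1) = (-1:ℝ) ^ (k+1) * r ^ (k+1)) := by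
      intro k
      induction k with
      | zero => exact ⟨⟨by simp [h0a], by simp [h0b]⟩, ⟨by simpa using ha1, by simpa using hb1⟩⟩
      | succ n ih =>
        have hrn : (r ^ n) ^ 2 ≠ 0 := pow_ne_zero _ (pow_ne_zero _ (ne_of_gt hrpos))
        have hsq : ((-1:ℝ) ^ n * r ^ n) ^ 2 = (r ^ n) ^ 2 := by
          rw [mul_pow, ← pow_mul, mul_comm n 2, pow_mul]; norm_num
        have hden : lam1 * (r ^ n) ^ 2 + lamn * ((-1:ℝ) ^ n * r ^ n) ^ 2
            = (lam1 + lamn) * (r ^ n) ^ 2 := by rw [hsq]; ring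
        have hvala : (lamn - lam1) * ((-1:ℝ) ^ n * r ^ n) ^ 2 / ((lam1 + lamn) * (r ^ n) ^ 2)
            = r := by
          rw [hsq, mul_div_mul_right _ _ hrn, hr, add_comm lam1 lamn]
        have hvalb : (lam1 - lamn) * (r ^ n) ^ 2 / ((lam1 + lamn) * (r ^ n) ^ 2) = -r := by
          rw [mul_div_mul_right _ _ hrn, hr, add_comm lam1 lamn,
            show lam1 - lamn = -(lamn - lam1) by ring, neg_div]
        refine ⟨ih.2, ?_, ?_⟩
        · have h := hra (n+1) (by omega)
          simp only [Nat.add_sub_cancel] at h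
          rw [h, ih.2.1, ih.1.1, ih.1.2, hden, hvala]
          ring
        · have h := hrb (n+1) (by omega)
          simp only [Nat.add_sub_cancel] at h
          rw [h, ih.2.2, ih.1.1, ih.1.2, hden, hvalb]
          ring
    exact fun k => (step k).1
  exact ⟨ha1, by rw [hb1], fun k => by rw [hkappa]; exact key k⟩
end

section
/- If R-linear bounds |d_k^j| ≤ F_j θ^k hold for all j < i and all k, and at step k one has |d_{k-1}^i| ≥ sqrt(Σ_{j<i} F_j^2) θ^{k-2} ≥ sqrt(Σ_{j<i}(d_{k-1}^j)^2), then |d_{k+1}^i| ≤ (1-1/κ)|d_k^i|. -/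
/-- If R-linear bounds |d_k^j| ≤ F_j θ^k hold for all j < i and all k, and
at step k one has |d_{k-1}^i| ≥ √(Σ_{j<i} F_j²) θ^{k-2} ≥ √(Σ_{j<i}(d_{k-1}^j)²), then
|d_{k+1}^i| ≤ (1-1/κ)|d_k^i|. -/
theorem bb_dominance_implies_contraction {n : ℕ}
    (lam : Fin (n + 1) → ℝ) (hpos : 0 < lam 0) (hmono : Monotone lam)
    (κ θ : ℝ) (hκ : κ = lam (Fin.last n) / lam 0) (hθ : θ = 1 - 1 / κ)
    (hθ0 : 0 < θ) (hθ1 : θ < 1)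
    (d : ℕ → Fin (n + 1) → ℝ) (F : Fin (n + 1) → ℝ) (hFpos : ∀ j, 0 < F j)
    (i : Fin (n + 1)) (k : ℕ) (hk : 2 ≤ k)
    (hrec : ∀ m, 1 ≤ m → ∀ l, d (m + 1) l = d m l *
      ((∑ j, (lam j - lam l) * d (m - 1) j ^ 2) / (∑ j, lam j * d (m - 1) j ^ 2)))
    (hF : ∀ j, j < i → ∀ m, |d m j| ≤ F j * θ ^ m)
    (hdom1 : Real.sqrt (∑ j ∈ Finset.Iio i, F j ^ 2) * θ ^ (k - 2) ≤ |d (k - 1) i|)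
    (hdom2 : Real.sqrt (∑ j ∈ Finset.Iio i, d (k - 1) j ^ 2) ≤
      Real.sqrt (∑ j ∈ Finset.Iio i, F j ^ 2) * θ ^ (k - 2)) :
    |d (k + 1) i| ≤ (1 - 1 / κ) * |d k i| := by
  have hln0 : 0 < lam (Fin.last n) := lt_of_lt_of_le hpos (hmono (Fin.zero_le _))
  have hlb : ∀ j, lam 0 ≤ lam j := fun j => hmono (Fin.zero_le j)
  have hub : ∀ j, lam j ≤ lam (Fin.last n) := fun j => hmono (Fin.le_last j)
  have hθ' : θ = 1 - lam 0 / lam (Fin.last n) := by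
    rw [hθ, hκ, one_div_div]
  -- dominance: Σ_{j<i} d_{k-1,j}² ≤ d_{k-1,i}²
  have hdom : ∑ j ∈ Finset.Iio i, d (k - 1) j ^ 2 ≤ d (k - 1) i ^ 2 := by
    have h1 : Real.sqrt (∑ j ∈ Finset.Iio i, d (k - 1) j ^ 2) ≤ |d (k - 1) i| :=
      hdom2.trans hdom1
    have hnn : 0 ≤ ∑ j ∈ Finset.Iio i, d (k - 1) j ^ 2 :=
      Finset.sum_nonneg fun j _ => sq_nonneg _
    calc ∑ j ∈ Finset.Iio i, d (k - 1) j ^ 2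
        = Real.sqrt (∑ j ∈ Finset.Iio i, d (k - 1) j ^ 2) ^ 2 :=
          (Real.sq_sqrt hnn).symm
      _ ≤ |d (k - 1) i| ^ 2 := pow_le_pow_left₀ (Real.sqrt_nonneg _) h1 2
      _ = d (k - 1) i ^ 2 := sq_abs _
  have hrec' := hrec k (le_trans (by norm_num) hk) i
  set N := ∑ j, (lam j - lam i) * d (k - 1) j ^ 2 with hNdef
  set D := ∑ j, lam j * d (k - 1) j ^ 2 with hDdef
  have hD0 : 0 ≤ D := Finset.sum_nonneg fun j _ =>
    mul_nonneg (le_of_lt (lt_of_lt_of_le hpos (hlb j))) (sq_nonneg _)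
  -- upper bound : N ≤ θ * D
  have hupper : N ≤ θ * D := by
    rw [hNdef, hDdef, Finset.mul_sum]
    apply Finset.sum_le_sum
    intro j _
    have heq : θ * (lam j * d (k - 1) j ^ 2) = (θ * lam j) * d (k - 1) j ^ 2 := by ring
    rw [heq]
    apply mul_le_mul_of_nonneg_right _ (sq_nonneg _)
    rw [hθ']
    have h1 : lam 0 / lam (Fin.last n) * lam j ≤ lam 0 := by
      rw [div_mul_eq_mul_div, div_le_iff₀ hln0]
      exact mul_le_mul_of_nonneg_left (hub j) hpos.le
    have := hlb i
    nlinarith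
  -- lower bound : -(θ * D) ≤ N
  have hlower : -(θ * D) ≤ N := by
    have key : 0 ≤ ∑ j, (lam j - lam i + θ * lam j) * d (k - 1) j ^ 2 := by
      have hsplit := Finset.sum_add_sum_compl (Finset.Iio i)
        (fun j => (lam j - lam i + θ * lam j) * d (k - 1) j ^ 2)
      rw [← hsplit]
      have hA : -(θ * lam i) * d (k - 1) i ^ 2 ≤
          ∑ j ∈ Finset.Iio i, (lam j - lam i + θ * lam j) * d (k - 1) j ^ 2 := by
        have step1 : ∑ j ∈ Finset.Iio i, (-(θ * lam i)) * d (k - 1) j ^ 2 ≤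
            ∑ j ∈ Finset.Iio i, (lam j - lam i + θ * lam j) * d (k - 1) j ^ 2 := by
          apply Finset.sum_le_sum
          intro j _
          apply mul_le_mul_of_nonneg_right _ (sq_nonneg _)
          -- need: -(θ λ_i) ≤ λ_j - λ_i + θ λ_j, i.e. (1-θ)λ_i ≤ (1+θ)λ_j
          rw [hθ']
          have h1 : lam 0 / lam (Fin.last n) * lam i ≤ lam 0 := by
            rw [div_mul_eq_mul_div, div_le_iff₀ hln0]
            exact mul_le_mul_of_nonneg_left (hub i) hpos.le
          have h2 := hlb j
          have h3 : 0 < lam j := lt_of_lt_of_le hpos (hlb j)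
          nlinarith
        have step0 : -(θ * lam i) * d (k - 1) i ^ 2 ≤
            ∑ j ∈ Finset.Iio i, (-(θ * lam i)) * d (k - 1) j ^ 2 := by
          rw [← Finset.mul_sum]
          have hthl : 0 ≤ θ * lam i :=
            mul_nonneg hθ0.le (le_of_lt (lt_of_lt_of_le hpos (hlb i)))
          nlinarith [hdom]
        exact step0.trans step1
      have hB : θ * lam i * d (k - 1) i ^ 2 ≤
          ∑ j ∈ (Finset.Iio i)ᶜ, (lam j - lam i + θ * lam j) * d (k - 1) j ^ 2 := by
        have hi : i ∈ (Finset.Iio i)ᶜ := by simp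
        have hterm : θ * lam i * d (k - 1) i ^ 2 =
            (lam i - lam i + θ * lam i) * d (k - 1) i ^ 2 := by ring
        rw [hterm]
        apply Finset.single_le_sum (f := fun j => (lam j - lam i + θ * lam j) * d (k - 1) j ^ 2) _ hi
        intro j hj
        have hij : i ≤ j := by
          simpa [Finset.mem_compl, Finset.mem_Iio, not_lt] using hj
        have hlamij : lam i ≤ lam j := hmono hij
        have hlamj : 0 < lam j := lt_of_lt_of_le hpos (hlb j)
        have : 0 ≤ lam j - lam i + θ * lam j := by nlinarith
        exact mul_nonneg this (sq_nonneg _)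
      nlinarith [hA, hB]
    have hcomb : N + θ * D = ∑ j, (lam j - lam i + θ * lam j) * d (k - 1) j ^ 2 := by
      rw [hNdef, hDdef, Finset.mul_sum, ← Finset.sum_add_distrib]
      apply Finset.sum_congr rfl
      intro j _
      ring
    linarith [key, hcomb.ge, hcomb.le]
  have habs : |N| ≤ θ * D := abs_le.mpr ⟨by linarith, hupper⟩
  have hq : |N / D| ≤ θ := by
    rcases eq_or_lt_of_le hD0 with h | h
    · have hN0 : N = 0 := by
        have : |N| ≤ 0 := by rw [← h] at habs; linarith [habs]
        exact abs_eq_zero.mp (le_antisymm this (abs_nonneg _))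
      simp [hN0, hθ0.le]
    · rw [abs_div, abs_of_pos h, div_le_iff₀ h]
      exact habs
  calc |d (k + 1) i| = |d k i * (N / D)| := by rw [hrec']
    _ = |d k i| * |N / D| := abs_mul _ _
    _ ≤ |d k i| * θ := mul_le_mul_of_nonneg_left hq (abs_nonneg _)
    _ = (1 - 1 / κ) * |d k i| := by rw [← hθ]; ring
end

section
/- The BB method with special initialization converges exactly linearly but not superlinearly: for x_0 = A^{-1}(c + v_1 + v_n), the gradient norms satisfy ‖g_k‖ = √2 ((κ-1)/(κ+1))^k for all k ≥ 0, so lim_k ‖g_{k+1}‖/‖g_k‖ = (κ-1)/(κ+1) > 0 whenever λ_1 < λ_n. -/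
open Matrix

/-- The BB method with the special initialization x_0 = A⁻¹(c + v_1 + v_n)
converges exactly linearly but not superlinearly: ‖g_k‖ = √2 ((κ-1)/(κ+1))^k for all
k ≥ 0, so ‖g_{k+1}‖/‖g_k‖ → (κ-1)/(κ+1) > 0 whenever λ_1 < λ_n. -/
theorem bb_exact_linear_not_superlinear {n : ℕ}
    (A : Matrix (Fin n) (Fin n) ℝ) (hA : A.PosDef) (c : Fin n → ℝ)
    (lam1 lamn : ℝ) (hlam1 : 0 < lam1) (hlt : lam1 < lamn)
    (v1 vn : Fin n → ℝ)
    (hv1 : A.mulVec v1 = lam1 • v1) (hvn : A.mulVec vn = lamn • vn)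
    (hu1 : v1 ⬝ᵥ v1 = 1) (hun : vn ⬝ᵥ vn = 1) (horth : v1 ⬝ᵥ vn = 0)
    (x g : ℕ → Fin n → ℝ) (α : ℕ → ℝ)
    (hg : ∀ k, g k = A.mulVec (x k) - c)
    (hx0 : A.mulVec (x 0) = c + v1 + vn)
    (hx : ∀ k, x (k + 1) = x k - α k • g k)
    (hα0 : α 0 = (g 0 ⬝ᵥ g 0) / (g 0 ⬝ᵥ A.mulVec (g 0)))
    (hα : ∀ k, α (k + 1) = (g k ⬝ᵥ g k) / (g k ⬝ᵥ A.mulVec (g k))) :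
    (∀ k, Real.sqrt (g k ⬝ᵥ g k) =
      Real.sqrt 2 * ((lamn / lam1 - 1) / (lamn / lam1 + 1)) ^ k) ∧
    Filter.Tendsto (fun k => Real.sqrt (g (k + 1) ⬝ᵥ g (k + 1)) / Real.sqrt (g k ⬝ᵥ g k))
      Filter.atTop (nhds ((lamn / lam1 - 1) / (lamn / lam1 + 1))) ∧
    0 < (lamn / lam1 - 1) / (lamn / lam1 + 1) := by
  set r : ℝ := (lamn - lam1) / (lamn + lam1) with hrdef
  have hsum : (0:ℝ) < lam1 + lamn := by linarith
  have hsum' : lam1 + lamn ≠ 0 := ne_of_gt hsum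
  have hsum'' : lamn + lam1 ≠ 0 := by intro h; apply hsum'; linarith
  have hl1 : lam1 ≠ 0 := ne_of_gt hlam1
  have hr : 0 < r := div_pos (by linarith) (by linarith)
  have hreq : (lamn / lam1 - 1) / (lamn / lam1 + 1) = r := by
    rw [hrdef]
    have h0 : 0 < lamn / lam1 := div_pos (by linarith) hlam1
    have h2 : lamn / lam1 + 1 ≠ 0 := by linarith
    field_simp
  have horth' : vn ⬝ᵥ v1 = 0 := by rw [dotProduct_comm]; exact horth
  have hdot : ∀ a b : ℝ, (a • v1 + b • vn) ⬝ᵥ (a • v1 + b • vn) = a ^ 2 + b ^ 2 := by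
    intro a b
    simp [dotProduct_add, add_dotProduct, dotProduct_smul, smul_dotProduct, hu1, hun,
      horth, horth']
    ring
  have hAdot : ∀ a b : ℝ, (a • v1 + b • vn) ⬝ᵥ A.mulVec (a • v1 + b • vn)
      = lam1 * a ^ 2 + lamn * b ^ 2 := by
    intro a b
    rw [mulVec_add, mulVec_smul, mulVec_smul, hv1, hvn]
    simp [dotProduct_add, add_dotProduct, dotProduct_smul, smul_dotProduct, hu1, hun,
      horth, horth']
    ring
  have hstep : ∀ m, g (m + 1) = g m - α m • A.mulVec (g m) := by
    intro m
    simp only [hg, hx, Matrix.mulVec_sub, Matrix.mulVec_smul]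
    abel
  have hαval : ∀ j, g j = r ^ j • v1 + (-r) ^ j • vn →
      (g j ⬝ᵥ g j) / (g j ⬝ᵥ A.mulVec (g j)) = 2 / (lam1 + lamn) := by
    intro j hj
    rw [hj, hdot, hAdot]
    have hne : (r ^ j) ^ 2 ≠ 0 := by positivity
    have h1 : ((-r) ^ j) ^ 2 = (r ^ j) ^ 2 := by
      rw [← pow_mul, ← pow_mul, mul_comm j 2, pow_mul, pow_mul, neg_sq]
    rw [h1]
    rw [show lam1 * (r ^ j) ^ 2 + lamn * (r ^ j) ^ 2 = (lam1 + lamn) * (r ^ j) ^ 2 by ring,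
      show (r ^ j) ^ 2 + (r ^ j) ^ 2 = 2 * (r ^ j) ^ 2 by ring]
    rw [mul_div_mul_right _ _ hne]
  have key : ∀ k, g k = r ^ k • v1 + (-r) ^ k • vn := by
    intro k
    induction k using Nat.strong_induction_on with
    | _ k IH =>
      match k with
      | 0 =>
        simp only [pow_zero, one_smul]
        rw [hg 0, hx0]; abel
      | Nat.succ m =>
        have hIm : g m = r ^ m • v1 + (-r) ^ m • vn := IH m (Nat.lt_succ_self m)
        have hαm : α m = 2 / (lam1 + lamn) := by
          match m with
          | 0 => rw [hα0]; exact hαval 0 hIm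
          | Nat.succ j =>
            rw [hα j]
            exact hαval j (IH j (by omega))
        have hc1 : r ^ m * (1 - 2 / (lam1 + lamn) * lam1) = r ^ (m + 1) := by
          rw [pow_succ, hrdef]
          congr 1
          field_simp
          ring
        have hc2 : (-r) ^ m * (1 - 2 / (lam1 + lamn) * lamn) = (-r) ^ (m + 1) := by
          rw [pow_succ, hrdef]
          congr 1
          field_simp
          ring
        calc g (m + 1) = g m - α m • A.mulVec (g m) := hstep m
          _ = (r ^ m • v1 + (-r) ^ m • vn) -
              (2 / (lam1 + lamn)) • (r ^ m • (lam1 • v1) + (-r) ^ m • (lamn • vn)) := by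
                rw [hIm, hαm, mulVec_add, mulVec_smul, mulVec_smul, hv1, hvn]
          _ = (r ^ m * (1 - 2 / (lam1 + lamn) * lam1)) • v1 +
              ((-r) ^ m * (1 - 2 / (lam1 + lamn) * lamn)) • vn := by module
          _ = r ^ (m + 1) • v1 + (-r) ^ (m + 1) • vn := by rw [hc1, hc2]
  have hnorm : ∀ k, Real.sqrt (g k ⬝ᵥ g k) = Real.sqrt 2 * r ^ k := by
    intro k
    rw [key k, hdot]
    have h1 : ((-r) ^ k) ^ 2 = (r ^ k) ^ 2 := by
      rw [← pow_mul, ← pow_mul, mul_comm k 2, pow_mul, pow_mul, neg_sq]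
    rw [h1, show (r ^ k) ^ 2 + (r ^ k) ^ 2 = 2 * (r ^ k) ^ 2 by ring,
      Real.sqrt_mul (by norm_num), Real.sqrt_sq (by positivity)]
  rw [hreq]
  refine ⟨hnorm, ?_, hr⟩
  have heq : (fun k => Real.sqrt (g (k + 1) ⬝ᵥ g (k + 1)) / Real.sqrt (g k ⬝ᵥ g k))
      = fun _ => r := by
    funext k
    rw [hnorm, hnorm, pow_succ]
    have h2 : Real.sqrt 2 * r ^ k ≠ 0 := by positivity
    field_simp
  rw [heq]
  exact tendsto_const_nhds
end
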